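/- For u = (u_1,…,u_n) ∈ ℝⁿ set D(u) = Σ_{k=1}^n e^{−u_k}, γ_ij(u) = e^{−(u_i+u_j)/2}/D(u) for i ≠ j, and define the n×n matrix-valued function ψ(u) by ψ_ii(u) = 2e^{−u_i}/D(u) − 1 and ψ_ij(u) = 2e^{−(u_i+u_j)/2}/D(u) for i ≠ j. Then for every fixed column index α and all i ≠ j one has ∂ψ_iα/∂u_j = γ_ij·ψ_jα, and Σ_{k=1}^n ∂ψ_iα/∂u_k = 0 for every i and α. -/

import Mathlib

/-- With `D(u) = ∑ₖ e^{-uₖ}`, `γ_ij(u) = e^{-(uᵢ+uⱼ)/2}/D(u)` for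
`i ≠ j`, and `ψ_ii = 2e^{-uᵢ}/D - 1`, `ψ_ij = 2e^{-(uᵢ+uⱼ)/2}/D` for `i ≠ j`,
one has, for every fixed column index `α` and all `i ≠ j`,
`∂ψ_iα/∂uⱼ = γ_ij ψ_jα`, and `∑ₖ ∂ψ_iα/∂uₖ = 0` for every `i` and `α`. -/
theorem stmt15 {n : ℕ} (γ ψ : (Fin n → ℝ) → Fin n → Fin n → ℝ)
    (hγ : ∀ u : Fin n → ℝ, ∀ i j : Fin n, i ≠ j →
      γ u i j = Real.exp (-(u i + u j) / 2) / ∑ k, Real.exp (-u k))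
    (hψ : ∀ u : Fin n → ℝ, ∀ i j : Fin n,
      ψ u i j =
        if i = j then 2 * Real.exp (-u i) / (∑ k, Real.exp (-u k)) - 1
        else 2 * Real.exp (-(u i + u j) / 2) / ∑ k, Real.exp (-u k)) :
    ∀ u : Fin n → ℝ, ∀ i α : Fin n,
      ∃ D : Fin n → ℝ,
        (∀ k : Fin n,
          HasDerivAt (fun t : ℝ => ψ (Function.update u k t) i α) (D k) (u k)) ∧
        (∀ k : Fin n, k ≠ i → D k = γ u i k * ψ u k α) ∧
        ∑ k, D k = 0 := by
  classical
  intro u i α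
  have hS : (0:ℝ) < ∑ k, Real.exp (-u k) :=
    Finset.sum_pos (fun k _ => Real.exp_pos _) ⟨i, Finset.mem_univ i⟩
  set S : ℝ := ∑ k, Real.exp (-u k) with hSdef
  set E : ℝ := Real.exp (-(u i + u α)/2) with hEdef
  -- unified formula for ψ
  have hψ' : ∀ v : Fin n → ℝ, ψ v i α
      = 2 * Real.exp (-(v i + v α)/2) / (∑ m, Real.exp (-v m))
        - (if i = α then (1:ℝ) else 0) := by
    intro v
    rw [hψ]
    by_cases h : i = α
    · subst h
      have hv : -(v i + v i)/2 = -v i := by ring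
      simp [hv]
    · simp [h]
  refine ⟨fun k =>
    (2 * (-((if i = k then (1:ℝ) else 0) + (if α = k then (1:ℝ) else 0))/2 * E) * S
      - 2 * E * (-Real.exp (-u k))) / S^2, ?_, ?_, ?_⟩
  · intro k
    have hupd : Function.update u k (u k) = u := Function.update_eq_self k u
    -- derivative of the denominator
    have hden : HasDerivAt (fun t => ∑ m, Real.exp (-(Function.update u k t m)))
        (-Real.exp (-u k)) (u k) := by
      have h1 : ∀ m : Fin n, m ∈ Finset.univ → HasDerivAt
          (fun t => Real.exp (-(Function.update u k t m)))
          (if m = k then -Real.exp (-u k) else 0) (u k) := by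
        intro m _
        by_cases h : m = k
        · subst h
          simp only [Function.update_self, if_pos rfl]
          simpa using ((hasDerivAt_id (u m)).neg.exp)
        · simp only [Function.update_of_ne h, if_neg h]
          exact hasDerivAt_const _ _
      have := HasDerivAt.fun_sum h1
      simpa using this
    -- derivative of the exponent of the numerator
    have hg : HasDerivAt
        (fun t => -(Function.update u k t i + Function.update u k t α)/2)
        (-((if i = k then (1:ℝ) else 0) + (if α = k then (1:ℝ) else 0))/2) (u k) := by
      simp only [Function.update_apply]
      by_cases h1 : i = k <;> by_cases h2 : α = k <;> simp only [h1, h2, if_true, if_false,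
        if_pos, if_neg]
      · simpa using (((hasDerivAt_id (u k)).add (hasDerivAt_id (u k))).neg.div_const 2)
      · simpa using (((hasDerivAt_id (u k)).add_const (u α)).neg.div_const 2)
      · simpa using (((hasDerivAt_id (u k)).const_add (u i)).neg.div_const 2)
      · simpa using (hasDerivAt_const (u k)
          (-(u i + u α)/2))
    have hnum : HasDerivAt
        (fun t => Real.exp (-(Function.update u k t i + Function.update u k t α)/2))
        (E * (-((if i = k then (1:ℝ) else 0) + (if α = k then (1:ℝ) else 0))/2)) (u k) := by
      have := hg.exp
      simpa [hupd, hEdef] using this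
    have hne : (∑ m, Real.exp (-(Function.update u k (u k) m))) ≠ 0 := by
      rw [hupd]; exact hS.ne'
    have hdiv := ((hnum.const_mul 2).div hden hne)
    have hfin := hdiv.sub_const (if i = α then (1:ℝ) else 0)
    have heq : (fun t : ℝ => ψ (Function.update u k t) i α)
        = fun t => 2 * Real.exp (-(Function.update u k t i + Function.update u k t α)/2)
            / (∑ m, Real.exp (-(Function.update u k t m)))
            - (if i = α then (1:ℝ) else 0) := by
      funext t; exact hψ' _
    rw [heq]
    convert hfin using 1
    · rfl
    · rfl
    · rfl
    rw [hupd]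
    ring
  · intro k hk
    rw [hγ u i k (Ne.symm hk), hψ, ← hSdef]
    dsimp only
    rw [if_neg (fun h => hk h.symm)]
    by_cases hkα : k = α
    · subst hkα
      rw [if_pos rfl, if_pos rfl, ← hEdef]
      field_simp
      ring
    · rw [if_neg hkα, if_neg (fun h => hkα h.symm)]
      have key : Real.exp (-(u i + u k)/2) * Real.exp (-(u k + u α)/2)
          = E * Real.exp (-u k) := by
        rw [hEdef, ← Real.exp_add, ← Real.exp_add]
        congr 1; ring
      have h2 : Real.exp (-(u i + u k)/2) / S * (2 * Real.exp (-(u k + u α)/2) / S)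
          = 2 * (Real.exp (-(u i + u k)/2) * Real.exp (-(u k + u α)/2)) / S^2 := by
        ring
      rw [h2, key]
      ring
  · have hrw : ∀ k : Fin n,
        (2 * (-((if i = k then (1:ℝ) else 0) + (if α = k then (1:ℝ) else 0))/2 * E) * S
          - 2 * E * (-Real.exp (-u k))) / S^2
        = (-(E*S)/S^2) * (if i = k then (1:ℝ) else 0)
          + (-(E*S)/S^2) * (if α = k then (1:ℝ) else 0)
          + (2*E/S^2) * Real.exp (-u k) := by
      intro k; ring
    simp only [hrw]
    rw [Finset.sum_add_distrib, Finset.sum_add_distrib, ← Finset.mul_sum, ← Finset.mul_sum,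
      ← Finset.mul_sum, ← hSdef]
    have h1 : ∑ k : Fin n, (if i = k then (1:ℝ) else 0) = 1 := by simp
    have h2 : ∑ k : Fin n, (if α = k then (1:ℝ) else 0) = 1 := by simp
    rw [h1, h2]
    field_simp
    ring
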